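/- arXiv:math-ph/0608059 — 4 statements merged into one kernel-verified Lean document; each statement's English description precedes it below -/
import Mathlib

section
/- For N(t) = [[t, -1], [t², -t]] and ε > 0, the solution Y(t,0) of ε Y'(t) = N(t) Y(t), Y(0) = I, is given explicitly by Y(t,0) = [[cosh(t/√ε), -(1/√ε) sinh(t/√ε)], [t cosh(t/√ε) - √ε sinh(t/√ε), cosh(t/√ε) - (t/√ε) sinh(t/√ε)]]. -/
lemma aux_zero (ε : ℝ) (hε : 0 < ε) (A B : ℝ → ℝ) (hA0 : A 0 = 0) (hB0 : B 0 = 0)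
    (hA : ∀ t, HasDerivAt A (ε⁻¹ * (t * A t - B t)) t)
    (hB : ∀ t, HasDerivAt B (ε⁻¹ * (t ^ 2 * A t - t * B t)) t) :
    ∀ t, A t = 0 ∧ B t = 0 := by
  set s := Real.sqrt ε with hs_def
  have hs : 0 < s := Real.sqrt_pos.mpr hε
  have hs2 : s ^ 2 = ε := Real.sq_sqrt hε.le
  have hsne : s ≠ 0 := hs.ne'
  have hεne : ε ≠ 0 := hε.ne'
  set C : ℝ → ℝ := fun t => B t - t * A t with hC_def
  have hC : ∀ t, HasDerivAt C (-(A t)) t := by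
    intro t
    have h1 : HasDerivAt (fun u : ℝ => u * A u) (1 * A t + t * (ε⁻¹ * (t * A t - B t))) t :=
      (hasDerivAt_id t).mul (hA t)
    have := (hB t).sub h1
    refine (this).congr_deriv (Eq.symm ?_)
    field_simp
    try ring
  set u : ℝ → ℝ := fun t => -(C t) / ε - A t / s with hu_def
  have hu : ∀ t, HasDerivAt u (-(u t) / s) t := by
    intro t
    have h1 := ((hC t).neg.div_const ε).sub ((hA t).div_const s)
    refine (h1).congr_deriv (Eq.symm ?_)
    rw [hu_def]
    simp only [hC_def]
    rw [← hs2]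
    field_simp
    ring
  set v : ℝ → ℝ := fun t => u t * Real.exp (t / s) with hv_def
  have hv : ∀ t, HasDerivAt v 0 t := by
    intro t
    have he : HasDerivAt (fun u : ℝ => Real.exp (u / s)) (Real.exp (t / s) * (1 / s)) t :=
      ((hasDerivAt_id t).div_const s).exp
    have := (hu t).mul he
    refine (this).congr_deriv (Eq.symm ?_)
    field_simp
    try ring
  have hvconst : ∀ t, v t = v 0 :=
    fun t => is_const_of_deriv_eq_zero (fun x => (hv x).differentiableAt)
      (fun x => (hv x).deriv) t 0
  have hu0 : u 0 = 0 := by simp [hu_def, hC_def, hA0, hB0]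
  have huz : ∀ t, u t = 0 := by
    intro t
    have h := hvconst t
    simp only [hv_def, hu0, zero_mul] at h
    exact (mul_eq_zero.mp h).resolve_right (Real.exp_ne_zero _)
  have hA' : ∀ t, HasDerivAt A (A t / s) t := by
    intro t
    have h := hA t
    have h2 : ε⁻¹ * (t * A t - B t) = A t / s := by
      have := huz t
      rw [hu_def] at this
      simp only [hC_def] at this
      have : -(B t - t * A t) / ε = A t / s := by linarith
      rw [← this]
      field_simp
      try ring
    rwa [h2] at h
  set w : ℝ → ℝ := fun t => A t * Real.exp (-(t / s)) with hw_def
  have hw : ∀ t, HasDerivAt w 0 t := by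
    intro t
    have he : HasDerivAt (fun u : ℝ => Real.exp (-(u / s))) (Real.exp (-(t / s)) * (-(1 / s))) t :=
      (((hasDerivAt_id t).div_const s).neg).exp
    have := (hA' t).mul he
    refine (this).congr_deriv (Eq.symm ?_)
    field_simp
    try ring
  have hwconst : ∀ t, w t = w 0 :=
    fun t => is_const_of_deriv_eq_zero (fun x => (hw x).differentiableAt)
      (fun x => (hw x).deriv) t 0
  intro t
  have hAz : A t = 0 := by
    have h := hwconst t
    simp only [hw_def, hA0, zero_mul] at h
    exact (mul_eq_zero.mp h).resolve_right (Real.exp_ne_zero _)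
  refine ⟨hAz, ?_⟩
  have := huz t
  rw [hu_def] at this
  simp only [hC_def, hAz] at this
  have hB' : -(B t - t * 0) / ε = 0 := by
    field_simp at this ⊢
    have := mul_right_cancel₀ hsne (show B t * s = 0 * s by linarith)
    linarith
  field_simp at hB'
  linarith

/-- For `N(t) = [[t, -1], [t², -t]]` and `ε > 0`, the solution of
`ε Y'(t) = N(t) Y(t)`, `Y(0) = I`, is given explicitly in terms of `cosh` and `sinh`. -/
theorem stmt7 (ε : ℝ) (hε : 0 < ε) (Y : ℝ → Matrix (Fin 2) (Fin 2) ℝ)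
    (hinit : Y 0 = 1)
    (hode : ∀ (t : ℝ) (i j : Fin 2), HasDerivAt (fun u => Y u i j)
      (ε⁻¹ * (((!![t, -1; t ^ 2, -t] : Matrix (Fin 2) (Fin 2) ℝ) * Y t) i j)) t) :
    ∀ t : ℝ, Y t =
      !![Real.cosh (t / Real.sqrt ε), -(1 / Real.sqrt ε) * Real.sinh (t / Real.sqrt ε);
        t * Real.cosh (t / Real.sqrt ε) - Real.sqrt ε * Real.sinh (t / Real.sqrt ε),
        Real.cosh (t / Real.sqrt ε) - (t / Real.sqrt ε) * Real.sinh (t / Real.sqrt ε)] := by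
  set s := Real.sqrt ε with hs_def
  have hs : 0 < s := Real.sqrt_pos.mpr hε
  have hs2 : s ^ 2 = ε := Real.sq_sqrt hε.le
  have hsne : s ≠ 0 := hs.ne'
  have hεne : ε ≠ 0 := hε.ne'
  have hc : ∀ x : ℝ, HasDerivAt (fun u : ℝ => Real.cosh (u / s))
      (Real.sinh (x / s) * (1 / s)) x := fun x => ((hasDerivAt_id x).div_const s).cosh
  have hsi : ∀ x : ℝ, HasDerivAt (fun u : ℝ => Real.sinh (u / s))
      (Real.cosh (x / s) * (1 / s)) x := fun x => ((hasDerivAt_id x).div_const s).sinh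
  -- column 0
  have h0 := aux_zero ε hε
      (fun x => Y x 0 0 - Real.cosh (x / s))
      (fun x => Y x 1 0 - (x * Real.cosh (x / s) - s * Real.sinh (x / s)))
      (by simp [hinit]) (by simp [hinit]) ?ha0 ?hb0
  -- column 1
  have h1 := aux_zero ε hε
      (fun x => Y x 0 1 - (-(1 / s) * Real.sinh (x / s)))
      (fun x => Y x 1 1 - (Real.cosh (x / s) - x / s * Real.sinh (x / s)))
      (by simp [hinit, Matrix.one_apply]) (by simp [hinit, Matrix.one_apply]) ?ha1 ?hb1
  · intro t
    have e00 := (h0 t).1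
    have e10 := (h0 t).2
    have e01 := (h1 t).1
    have e11 := (h1 t).2
    simp only [one_div] at e00 e10 e01 e11
    ext i j
    fin_cases i <;> fin_cases j <;> simp <;> linarith
  case ha0 =>
    intro x
    have hd := (hode x 0 0).sub (hc x)
    refine (hd).congr_deriv (Eq.symm ?_)
    simp [Matrix.mul_apply, Fin.sum_univ_two]
    rw [← hs2]
    field_simp
    ring
  case hb0 =>
    intro x
    have hb : HasDerivAt (fun u : ℝ => u * Real.cosh (u / s) - s * Real.sinh (u / s))
        (1 * Real.cosh (x / s) + x * (Real.sinh (x / s) * (1 / s)) -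
          s * (Real.cosh (x / s) * (1 / s))) x :=
      ((hasDerivAt_id x).mul (hc x)).sub ((hsi x).const_mul s)
    have hd := (hode x 1 0).sub hb
    refine (hd).congr_deriv (Eq.symm ?_)
    simp [Matrix.mul_apply, Fin.sum_univ_two]
    rw [← hs2]
    field_simp
    ring
  case ha1 =>
    intro x
    have ha : HasDerivAt (fun u : ℝ => -(1 / s) * Real.sinh (u / s))
        (-(1 / s) * (Real.cosh (x / s) * (1 / s))) x := (hsi x).const_mul (-(1 / s))
    have hd := (hode x 0 1).sub ha
    refine (hd).congr_deriv (Eq.symm ?_)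
    simp [Matrix.mul_apply, Fin.sum_univ_two]
    rw [← hs2]
    field_simp
    ring
  case hb1 =>
    intro x
    have hb : HasDerivAt (fun u : ℝ => Real.cosh (u / s) - u / s * Real.sinh (u / s))
        (Real.sinh (x / s) * (1 / s) -
          (1 / s * Real.sinh (x / s) + x / s * (Real.cosh (x / s) * (1 / s)))) x :=
      (hc x).sub (((hasDerivAt_id x).div_const s).mul (hsi x))
    have hd := (hode x 1 1).sub hb
    refine (hd).congr_deriv (Eq.symm ?_)
    simp [Matrix.mul_apply, Fin.sum_univ_two]
    rw [← hs2]
    field_simp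
    ring
end

section
/- For N(t) = [[t, -1], [t², -t]], the solution Y(t,0) of ε Y' = N(t) Y, Y(0)=I, satisfies ‖Y(t,0)‖ ≥ (1/√ε) sinh(t/√ε) for t > 0; in particular ‖Y(t,0)‖ → ∞ as ε → 0⁺ for any fixed t > 0, growing at least like e^{t/√ε}/(2√ε). -/
open Filter
open scoped Topology

attribute [local instance] Matrix.linftyOpNormedAddCommGroup

lemma stmt8_entry_le (A : Matrix (Fin 2) (Fin 2) ℝ) (i j : Fin 2) : |A i j| ≤ ‖A‖ := by
  have h : ‖A i j‖₊ ≤ ‖A‖₊ := by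
    rw [Matrix.linfty_opNNNorm_def]
    have h1 : ‖A i j‖₊ ≤ ∑ k, ‖A i k‖₊ :=
      Finset.single_le_sum (f := fun k => ‖A i k‖₊) (fun _ _ => zero_le) (Finset.mem_univ j)
    have h2 : (∑ k, ‖A i k‖₊) ≤ Finset.univ.sup (fun i => ∑ k, ‖A i k‖₊) :=
      Finset.le_sup (f := fun i => ∑ k, ‖A i k‖₊) (Finset.mem_univ i)
    exact le_trans h1 h2
  have := (NNReal.coe_le_coe.2 h : (‖A i j‖₊ : ℝ) ≤ (‖A‖₊ : ℝ))
  simpa [Real.norm_eq_abs] using this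

lemma stmt8_key (Y : ℝ → ℝ → Matrix (Fin 2) (Fin 2) ℝ)
    (hinit : ∀ ε : ℝ, 0 < ε → Y ε 0 = 1)
    (hode : ∀ ε : ℝ, 0 < ε → ∀ (t : ℝ) (i j : Fin 2),
      HasDerivAt (fun u => Y ε u i j)
        (ε⁻¹ * (((!![t, -1; t ^ 2, -t] : Matrix (Fin 2) (Fin 2) ℝ) * Y ε t) i j)) t)
    (ε : ℝ) (hε : 0 < ε) (t : ℝ) :
    Y ε t 0 1 = -((Real.sqrt ε)⁻¹ * Real.sinh ((Real.sqrt ε)⁻¹ * t)) := by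
  set s : ℝ := (Real.sqrt ε)⁻¹ with hs
  have hsq : Real.sqrt ε > 0 := Real.sqrt_pos.2 hε
  have hss : s * s = ε⁻¹ := by
    rw [hs, ← mul_inv]
    congr 1
    exact Real.mul_self_sqrt hε.le
  set u : ℝ → ℝ := fun r => Y ε r 0 1 with hu_def
  set v : ℝ → ℝ := fun r => Y ε r 1 1 - r * Y ε r 0 1 with hv_def
  have hu : ∀ r, HasDerivAt u (-(s * s * v r)) r := by
    intro r
    have h01 := hode ε hε r 0 1
    have h : ε⁻¹ * (((!![r, -1; r ^ 2, -r] : Matrix (Fin 2) (Fin 2) ℝ) * Y ε r) 0 1)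
        = -(s * s * v r) := by
      rw [hss]
      simp only [Matrix.mul_apply, Fin.sum_univ_two, hv_def]
      simp [Matrix.cons_val_zero, Matrix.cons_val_one]
      ring
    rwa [h] at h01
  have hv : ∀ r, HasDerivAt v (-(u r)) r := by
    intro r
    have h11 := hode ε hε r 1 1
    have h01 := hode ε hε r 0 1
    have := h11.sub ((hasDerivAt_id r).mul h01)
    have h : ε⁻¹ * (((!![r, -1; r ^ 2, -r] : Matrix (Fin 2) (Fin 2) ℝ) * Y ε r) 1 1)
        - (1 * Y ε r 0 1 + r * (ε⁻¹ *
          (((!![r, -1; r ^ 2, -r] : Matrix (Fin 2) (Fin 2) ℝ) * Y ε r) 0 1))) = -(u r) := by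
      simp only [Matrix.mul_apply, Fin.sum_univ_two, hu_def]
      simp [Matrix.cons_val_zero, Matrix.cons_val_one]
      ring
    simp only [id_eq] at this
    rwa [h] at this
  -- cosh(s r) and sinh(s r) derivatives
  have hmul : ∀ r : ℝ, HasDerivAt (fun x : ℝ => s * x) s r := by
    intro r
    simpa using (hasDerivAt_id r).const_mul s
  have hcosh : ∀ r : ℝ, HasDerivAt (fun r => Real.cosh (s * r)) (Real.sinh (s * r) * s) r :=
    fun r => (hmul r).cosh
  have hsinh : ∀ r : ℝ, HasDerivAt (fun r => Real.sinh (s * r)) (Real.cosh (s * r) * s) r :=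
    fun r => (hmul r).sinh
  set P : ℝ → ℝ := fun r => Real.cosh (s * r) * u r + s * Real.sinh (s * r) * v r with hP_def
  set Q : ℝ → ℝ := fun r => Real.sinh (s * r) * u r + s * Real.cosh (s * r) * v r with hQ_def
  have hP : ∀ r, HasDerivAt P 0 r := by
    intro r
    have h := ((hcosh r).mul (hu r)).add (((hsinh r).const_mul s).mul (hv r))
    have : Real.sinh (s * r) * s * u r + Real.cosh (s * r) * -(s * s * v r)
        + (s * (Real.cosh (s * r) * s) * v r + s * Real.sinh (s * r) * -(u r)) = 0 := by ring
    rwa [this] at h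
  have hQ : ∀ r, HasDerivAt Q 0 r := by
    intro r
    have h := ((hsinh r).mul (hu r)).add (((hcosh r).const_mul s).mul (hv r))
    have : Real.cosh (s * r) * s * u r + Real.sinh (s * r) * -(s * s * v r)
        + (s * (Real.sinh (s * r) * s) * v r + s * Real.cosh (s * r) * -(u r)) = 0 := by ring
    rwa [this] at h
  have hPc : P t = P 0 :=
    is_const_of_deriv_eq_zero (fun r => (hP r).differentiableAt) (fun r => (hP r).deriv) t 0
  have hQc : Q t = Q 0 :=
    is_const_of_deriv_eq_zero (fun r => (hQ r).differentiableAt) (fun r => (hQ r).deriv) t 0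
  have hu0 : u 0 = 0 := by simp [hu_def, hinit ε hε, Matrix.one_apply]
  have hv0 : v 0 = 1 := by simp [hv_def, hinit ε hε, Matrix.one_apply]
  have hP0 : Real.cosh (s * t) * u t + s * Real.sinh (s * t) * v t = 0 := by
    have := hPc
    simp only [hP_def, mul_zero, Real.cosh_zero, Real.sinh_zero, hu0, hv0] at this
    linarith [this]
  have hQ0 : Real.sinh (s * t) * u t + s * Real.cosh (s * t) * v t = s := by
    have := hQc
    simp only [hQ_def, mul_zero, Real.cosh_zero, Real.sinh_zero, hu0, hv0] at this
    linarith [this]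
  have hid : Real.cosh (s * t) ^ 2 - Real.sinh (s * t) ^ 2 = 1 := Real.cosh_sq_sub_sinh_sq _
  have : u t = -(s * Real.sinh (s * t)) := by
    linear_combination Real.cosh (s * t) * hP0 - Real.sinh (s * t) * hQ0 - u t * hid
  simpa [hu_def] using this

/-- For `N(t) = [[t, -1], [t², -t]]`, the solution `Y_ε(t)` of `ε Y' = N(t) Y`, `Y(0) = I`,
satisfies `‖Y_ε(t)‖ ≥ sinh(t/√ε)/√ε` for `t > 0`; in particular `‖Y_ε(t)‖ → ∞` as
`ε → 0⁺` for fixed `t > 0`, growing at least like `(e^{t/√ε} - 1)/(2√ε)`. -/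
theorem stmt8 (Y : ℝ → ℝ → Matrix (Fin 2) (Fin 2) ℝ)
    (hinit : ∀ ε : ℝ, 0 < ε → Y ε 0 = 1)
    (hode : ∀ ε : ℝ, 0 < ε → ∀ (t : ℝ) (i j : Fin 2),
      HasDerivAt (fun u => Y ε u i j)
        (ε⁻¹ * (((!![t, -1; t ^ 2, -t] : Matrix (Fin 2) (Fin 2) ℝ) * Y ε t) i j)) t) :
    ∀ t : ℝ, 0 < t →
      (∀ ε : ℝ, 0 < ε →
        Real.sinh (t / Real.sqrt ε) / Real.sqrt ε ≤ ‖Y ε t‖ ∧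
        (Real.exp (t / Real.sqrt ε) - 1) / (2 * Real.sqrt ε) ≤ ‖Y ε t‖) ∧
      Tendsto (fun ε : ℝ => ‖Y ε t‖) (𝓝[>] (0 : ℝ)) atTop := by
  intro t ht
  have main : ∀ ε : ℝ, 0 < ε → Real.sinh (t / Real.sqrt ε) / Real.sqrt ε ≤ ‖Y ε t‖ := by
    intro ε hε
    have hsq : (0 : ℝ) < Real.sqrt ε := Real.sqrt_pos.2 hε
    have hentry := stmt8_key Y hinit hode ε hε t
    have harg : (Real.sqrt ε)⁻¹ * t = t / Real.sqrt ε := by rw [inv_mul_eq_div]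
    have hsinh_pos : 0 ≤ Real.sinh (t / Real.sqrt ε) :=
      (Real.sinh_pos_iff.2 (div_pos ht hsq)).le
    have h1 : |Y ε t 0 1| = Real.sinh (t / Real.sqrt ε) / Real.sqrt ε := by
      rw [hentry, harg, abs_neg, abs_mul, abs_of_nonneg hsinh_pos,
        abs_of_pos (inv_pos.2 hsq), inv_mul_eq_div]
    calc Real.sinh (t / Real.sqrt ε) / Real.sqrt ε = |Y ε t 0 1| := h1.symm
      _ ≤ ‖Y ε t‖ := stmt8_entry_le _ _ _
  constructor
  · intro ε hε
    refine ⟨main ε hε, ?_⟩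
    have hsq : (0 : ℝ) < Real.sqrt ε := Real.sqrt_pos.2 hε
    refine le_trans ?_ (main ε hε)
    have hx : 0 < t / Real.sqrt ε := div_pos ht hsq
    have hexp : Real.exp (-(t / Real.sqrt ε)) ≤ 1 := Real.exp_le_one_iff.2 (by linarith)
    have h2 : (Real.exp (t / Real.sqrt ε) - 1) / 2 ≤ Real.sinh (t / Real.sqrt ε) := by
      rw [Real.sinh_eq]
      have : Real.exp (-(t / Real.sqrt ε)) ≤ 1 := hexp
      linarith
    have : (Real.exp (t / Real.sqrt ε) - 1) / (2 * Real.sqrt ε)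
        = ((Real.exp (t / Real.sqrt ε) - 1) / 2) / Real.sqrt ε := by ring
    rw [this]
    exact div_le_div_of_nonneg_right h2 hsq.le |>.trans_eq rfl
  · -- tendsto
    have hlow : ∀ ε : ℝ, 0 < ε → t / ε ≤ ‖Y ε t‖ := by
      intro ε hε
      have hsq : (0 : ℝ) < Real.sqrt ε := Real.sqrt_pos.2 hε
      have hx : 0 < t / Real.sqrt ε := div_pos ht hsq
      have hs : t / Real.sqrt ε ≤ Real.sinh (t / Real.sqrt ε) := (Real.self_lt_sinh_iff.2 hx).le
      have h3 : t / ε ≤ Real.sinh (t / Real.sqrt ε) / Real.sqrt ε := by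
        have := div_le_div_of_nonneg_right hs hsq.le
        have heq : t / Real.sqrt ε / Real.sqrt ε = t / ε := by
          rw [div_div, Real.mul_self_sqrt hε.le]
        linarith [heq ▸ this]
      exact h3.trans (main ε hε)
    refine tendsto_atTop_mono' _ (eventually_nhdsWithin_of_forall (fun ε hε => hlow ε hε)) ?_
    have : Tendsto (fun ε : ℝ => t * ε⁻¹) (𝓝[>] (0 : ℝ)) atTop :=
      tendsto_inv_nhdsGT_zero.const_mul_atTop ht
    exact this.congr (fun ε => by rw [div_eq_mul_inv])
end

section
/- Under the assumptions of the Duhamel formula, if additionally ‖T(t,s)‖ ≤ M e^{∫_s^t ω(u) du} for a constant M ≥ 1 and an integrable real function ω, then ‖S(t,r)‖ ≤ M e^{∫_r^t (ω(u) + M ‖B(u)‖) du} for all r ≤ t. -/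
open intervalIntegral

open MeasureTheory Set Filter Topology


private lemma swap_id {β h : ℝ → ℝ} (hβall : ∀ a b : ℝ, IntervalIntegrable β volume a b)
    {r x : ℝ} (hrx : r ≤ x) (hh : IntervalIntegrable h volume r x) :
    ∫ s in r..x, (∫ u in r..s, h u) * β s
      = ∫ u in r..x, h u * ((∫ v in r..x, β v) - ∫ v in r..u, β v) := by
  set μ := volume.restrict (Ioc r x) with hμ
  have hhμ : Integrable h μ := (intervalIntegrable_iff_integrableOn_Ioc_of_le hrx).1 hh
  have hβμ : Integrable β μ := (intervalIntegrable_iff_integrableOn_Ioc_of_le hrx).1 (hβall r x)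
  have hbase : Integrable (fun p : ℝ × ℝ => h p.1 * β p.2) (μ.prod μ) := hhμ.mul_prod hβμ
  have hmeas : MeasurableSet {p : ℝ × ℝ | p.1 ≤ p.2} :=
    measurableSet_le measurable_fst measurable_snd
  set G : ℝ × ℝ → ℝ := ({p : ℝ × ℝ | p.1 ≤ p.2}).indicator (fun p => h p.1 * β p.2) with hG
  have hGint : Integrable G (μ.prod μ) := hbase.indicator hmeas
  have swap : ∫ u, (∫ s, G (u, s) ∂μ) ∂μ = ∫ s, (∫ u, G (u, s) ∂μ) ∂μ :=
    integral_integral_swap (f := fun u s => G (u, s)) hGint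
  have left : ∫ u, (∫ s, G (u, s) ∂μ) ∂μ
      = ∫ u in Ioc r x, h u * ((∫ v in r..x, β v) - ∫ v in r..u, β v) := by
    rw [hμ]
    apply setIntegral_congr_fun measurableSet_Ioc
    intro u hu
    dsimp only
    have h1 : (fun s => G (u, s)) = (Ici u).indicator (fun s => h u * β s) := by
      funext s
      simp only [hG, Set.indicator_apply, Set.mem_setOf_eq, Set.mem_Ici]
    rw [h1, MeasureTheory.integral_indicator measurableSet_Ici,
      Measure.restrict_restrict measurableSet_Ici]
    have h2 : Ici u ∩ Ioc r x = Icc u x := by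
      ext s
      simp only [mem_inter_iff, mem_Ici, mem_Ioc, mem_Icc]
      exact ⟨fun ⟨a, _, c⟩ => ⟨a, c⟩, fun ⟨a, c⟩ => ⟨a, lt_of_lt_of_le hu.1 a, c⟩⟩
    rw [h2, integral_Icc_eq_integral_Ioc, MeasureTheory.integral_const_mul,
      ← intervalIntegral.integral_of_le hu.2]
    congr 1
    have := intervalIntegral.integral_add_adjacent_intervals (hβall r u) (hβall u x)
    linarith
  have right : ∫ s, (∫ u, G (u, s) ∂μ) ∂μ
      = ∫ s in Ioc r x, (∫ u in r..s, h u) * β s := by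
    rw [hμ]
    apply setIntegral_congr_fun measurableSet_Ioc
    intro s hs
    dsimp only
    have h1 : (fun u => G (u, s)) = (Iic s).indicator (fun u => h u * β s) := by
      funext u
      simp only [hG, Set.indicator_apply, Set.mem_setOf_eq, Set.mem_Iic]
    rw [h1, MeasureTheory.integral_indicator measurableSet_Iic,
      Measure.restrict_restrict measurableSet_Iic]
    have h2 : Iic s ∩ Ioc r x = Ioc r s := by
      ext u
      simp only [mem_inter_iff, mem_Iic, mem_Ioc]
      exact ⟨fun ⟨a, b, _⟩ => ⟨b, a⟩, fun ⟨b, a⟩ => ⟨a, b, a.trans hs.2⟩⟩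
    rw [h2, MeasureTheory.integral_mul_const, ← intervalIntegral.integral_of_le hs.1.le]
  rw [intervalIntegral.integral_of_le hrx, intervalIntegral.integral_of_le hrx,
    right.symm, ← swap, left]

private lemma Jk {β : ℝ → ℝ} (hβall : ∀ a b : ℝ, IntervalIntegrable β volume a b)
    {r t : ℝ} :
    ∀ k : ℕ, ∀ x ∈ Icc r t,
      ∫ s in r..x, β s * (∫ u in r..s, β u) ^ k
        = (∫ u in r..x, β u) ^ (k + 1) / (k + 1) := by
  have hBc : Continuous fun y => ∫ u in r..y, β u :=
    intervalIntegral.continuous_primitive hβall r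
  intro k
  induction k with
  | zero => intro x _; simp
  | succ k ih =>
    intro x hx
    have hrx : r ≤ x := hx.1
    set Bh : ℝ → ℝ := fun y => ∫ u in r..y, β u with hBh
    have hhint : ∀ m : ℕ, IntervalIntegrable (fun u => β u * Bh u ^ m) volume r x :=
      fun m => (hβall r x).mul_continuousOn ((hBc.pow m).continuousOn)
    have key := swap_id hβall hrx (hhint k)
    -- rewrite LHS of key using ih
    have lhs_eq : ∫ s in r..x, (∫ u in r..s, β u * Bh u ^ k) * β s
        = (∫ s in r..x, β s * Bh s ^ (k + 1)) / (k + 1) := by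
      rw [← intervalIntegral.integral_div]
      apply intervalIntegral.integral_congr
      intro s hs
      dsimp only
      rw [uIcc_of_le hrx] at hs
      have hs' : s ∈ Icc r t := ⟨hs.1, hs.2.trans hx.2⟩
      rw [ih s hs']
      push_cast
      ring
    have rhs_eq : ∫ u in r..x, (β u * Bh u ^ k) * (Bh x - Bh u)
        = Bh x ^ (k + 2) / (k + 1) - ∫ s in r..x, β s * Bh s ^ (k + 1) := by
      have e1 : ∀ u, (β u * Bh u ^ k) * (Bh x - Bh u)
          = (β u * Bh u ^ k) * Bh x - β u * Bh u ^ (k + 1) := by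
        intro u; ring
      simp only [e1]
      rw [intervalIntegral.integral_sub ((hhint k).mul_const _) (hhint (k + 1)),
        intervalIntegral.integral_mul_const, ih x hx]
      push_cast
      ring
    rw [lhs_eq, rhs_eq] at key
    have hk1 : (0:ℝ) < k + 1 := by positivity
    have hk2 : ((k:ℝ) + 1) + 1 ≠ 0 := by positivity
    push_cast
    field_simp at key ⊢
    nlinarith [key]

open Filter Topology in
private lemma II_finset_sum {ι : Type*} {a b : ℝ} (s : Finset ι) (f : ι → ℝ → ℝ)
    (h : ∀ i ∈ s, IntervalIntegrable (f i) volume a b) :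
    IntervalIntegrable (fun x => ∑ i ∈ s, f i x) volume a b := by
  classical
  induction s using Finset.induction_on with
  | empty => simpa using intervalIntegrable_const
  | insert _ _ hnotmem ih =>
    simp only [Finset.sum_insert hnotmem]
    exact (h _ (Finset.mem_insert_self _ _)).add
      (ih fun i hi => h i (Finset.mem_insert_of_mem hi))

open Filter Topology in
private lemma gronwall_int {β f : ℝ → ℝ} {r t C : ℝ}
    (hβall : ∀ a b : ℝ, IntervalIntegrable β volume a b)
    (hβ0 : ∀ s, 0 ≤ β s)
    (hf : ContinuousOn f (Icc r t))
    (hC : 0 ≤ C)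
    (hyp : ∀ x ∈ Icc r t, f x ≤ C + ∫ s in r..x, β s * f s) :
    ∀ x ∈ Icc r t, f x ≤ C * Real.exp (∫ s in r..x, β s) := by
  obtain ⟨K₀, hK₀⟩ := IsCompact.exists_bound_of_continuousOn isCompact_Icc hf
  set K : ℝ := max K₀ 0 with hK
  have hK0 : (0:ℝ) ≤ K := le_max_right _ _
  have hfK : ∀ x ∈ Icc r t, f x ≤ K := fun x hx =>
    ((le_abs_self _).trans ((hK₀ x hx).trans (le_max_left _ _)))
  set Bh : ℝ → ℝ := fun y => ∫ s in r..y, β s with hBh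
  have hBc : Continuous Bh := intervalIntegral.continuous_primitive hβall r
  have hB0 : ∀ x ∈ Icc r t, 0 ≤ Bh x := fun x hx =>
    intervalIntegral.integral_nonneg hx.1 (fun s _ => hβ0 s)
  have P : ∀ n : ℕ, ∀ x ∈ Icc r t,
      f x ≤ C * (∑ k ∈ Finset.range n, Bh x ^ k / k.factorial)
        + K * Bh x ^ n / n.factorial := by
    intro n
    induction n with
    | zero => intro x hx; simpa using hfK x hx
    | succ n ih =>
      intro x hx
      have hrx : r ≤ x := hx.1
      have hsubset : Icc r x ⊆ Icc r t := Icc_subset_Icc le_rfl hx.2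
      have hfint : IntervalIntegrable (fun s => β s * f s) volume r x :=
        (hβall r x).mul_continuousOn (by rw [uIcc_of_le hrx]; exact hf.mono hsubset)
      have hhint : ∀ m : ℕ, IntervalIntegrable (fun u => β u * Bh u ^ m) volume r x :=
        fun m => (hβall r x).mul_continuousOn ((hBc.pow m).continuousOn)
      set g : ℝ → ℝ := fun s =>
        (∑ k ∈ Finset.range n, (C / k.factorial) * (β s * Bh s ^ k))
          + (K / n.factorial) * (β s * Bh s ^ n) with hg
      have hgint : IntervalIntegrable g volume r x :=
        (II_finset_sum _ _ (fun k _ => (hhint k).const_mul _)).add ((hhint n).const_mul _)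
      have gval : ∀ s : ℝ, g s = β s * (C * (∑ k ∈ Finset.range n, Bh s ^ k / k.factorial)
          + K * Bh s ^ n / n.factorial) := by
        intro s
        rw [hg]
        dsimp only
        have h1 : ∑ k ∈ Finset.range n, (C / (k.factorial:ℝ)) * (β s * Bh s ^ k)
            = β s * (C * ∑ k ∈ Finset.range n, Bh s ^ k / k.factorial) := by
          rw [Finset.mul_sum, Finset.mul_sum]
          exact Finset.sum_congr rfl fun k _ => by ring
        rw [h1]
        ring
      have step1 : f x ≤ C + ∫ s in r..x, g s := by
        refine (hyp x hx).trans (add_le_add le_rfl ?_)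
        apply intervalIntegral.integral_mono_on hrx hfint hgint
        intro s hs
        rw [gval s]
        exact mul_le_mul_of_nonneg_left (ih s (hsubset hs)) (hβ0 s)
      have step2 : ∫ s in r..x, g s
          = (∑ k ∈ Finset.range n, (C / k.factorial) * (Bh x ^ (k+1) / ((k:ℝ)+1)))
            + (K / n.factorial) * (Bh x ^ (n+1) / ((n:ℝ)+1)) := by
        rw [hg]
        rw [intervalIntegral.integral_add
          (II_finset_sum _ _ (fun k _ => (hhint k).const_mul _))
          ((hhint n).const_mul _)]
        rw [intervalIntegral.integral_finset_sum (fun k _ => (hhint k).const_mul _)]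
        congr 1
        · exact Finset.sum_congr rfl (fun k _ => by
            rw [intervalIntegral.integral_const_mul, Jk hβall k x hx])
        · rw [intervalIntegral.integral_const_mul, Jk hβall n x hx]
      rw [step2] at step1
      refine step1.trans (le_of_eq ?_)
      have term_eq : ∀ (a : ℝ) (k : ℕ), a / (k.factorial:ℝ) * (Bh x ^ (k+1) / ((k:ℝ)+1))
          = a * (Bh x ^ (k+1) / ((k+1).factorial : ℝ)) := by
        intro a k
        have hfac : (((k+1).factorial : ℕ) : ℝ) = ((k:ℝ)+1) * k.factorial := by
          rw [Nat.factorial_succ]; push_cast; ring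
        rw [hfac]
        simp only [div_eq_mul_inv, mul_inv]
        ring
      rw [Finset.sum_congr rfl (fun k (_ : k ∈ Finset.range n) => term_eq C k),
        term_eq K n,
        Finset.sum_range_succ' (fun k => Bh x ^ k / (k.factorial : ℝ)) n,
        mul_add, Finset.mul_sum]
      simp only [pow_zero, Nat.factorial_zero, Nat.cast_one, div_one, mul_one]
      ring
  intro x hx
  have hlim : Tendsto (fun n : ℕ => C * Real.exp (Bh x) + K * (Bh x ^ n / n.factorial))
      atTop (𝓝 (C * Real.exp (Bh x))) := by
    have h0 : Tendsto (fun n : ℕ => Bh x ^ n / (n.factorial : ℝ)) atTop (𝓝 0) :=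
      FloorSemiring.tendsto_pow_div_factorial_atTop (Bh x)
    simpa using tendsto_const_nhds.add (h0.const_mul K)
  refine ge_of_tendsto' hlim (fun n => ?_)
  have hsum : ∑ k ∈ Finset.range n, Bh x ^ k / (k.factorial : ℝ) ≤ Real.exp (Bh x) :=
    Real.sum_le_exp_of_nonneg (hB0 x hx) n
  calc f x ≤ C * (∑ k ∈ Finset.range n, Bh x ^ k / k.factorial)
        + K * Bh x ^ n / n.factorial := P n x hx
    _ ≤ C * Real.exp (Bh x) + K * (Bh x ^ n / n.factorial) := by
        rw [mul_div_assoc]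
        exact add_le_add (mul_le_mul_of_nonneg_left hsum hC) le_rfl

/-- Under the assumptions of the Duhamel formula, if moreover
`‖T(t,s)‖ ≤ M e^{∫_s^t ω(u) du}` for a constant `M ≥ 1` and an integrable real
function `ω`, then `‖S(t,r)‖ ≤ M e^{∫_r^t (ω(u) + M ‖B(u)‖) du}` for all `r ≤ t`. -/
theorem stmt10 {X : Type*} [NormedAddCommGroup X] [NormedSpace ℂ X] [CompleteSpace X]
    (D : Submodule ℂ X) (hDdense : Dense (D : Set X))
    (A : ℝ → X →ₗ[ℂ] X) (B : ℝ → X →L[ℂ] X)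
    (hBcont : ∀ φ : X, Continuous fun t => B t φ)
    (T S : ℝ → ℝ → X →L[ℂ] X)
    (hTD : ∀ t s : ℝ, ∀ φ ∈ D, T t s φ ∈ D)
    (hSD : ∀ t s : ℝ, ∀ φ ∈ D, S t s φ ∈ D)
    (hTinit : ∀ s : ℝ, T s s = 1) (hSinit : ∀ s : ℝ, S s s = 1)
    (hT : ∀ φ ∈ D, ∀ s t : ℝ,
      HasDerivAt (fun u => T u s φ) (-Complex.I • A t (T t s φ)) t)
    (hT' : ∀ φ ∈ D, ∀ t s : ℝ,
      HasDerivAt (fun u => T t u φ) (Complex.I • T t s (A s φ)) s)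
    (hS : ∀ φ ∈ D, ∀ r t : ℝ,
      HasDerivAt (fun u => S u r φ)
        (-Complex.I • (A t (S t r φ) + B t (S t r φ))) t)
    (hcont : ∀ φ ∈ D, ∀ t r : ℝ,
      Continuous fun s => T t s (B s (S s r φ)))
    (M : ℝ) (hM : 1 ≤ M) (ω : ℝ → ℝ)
    (hω : ∀ r t : ℝ, r ≤ t → IntervalIntegrable ω MeasureTheory.volume r t)
    (hB : ∀ r t : ℝ, r ≤ t →
      IntervalIntegrable (fun u => ‖B u‖) MeasureTheory.volume r t)
    (hTbound : ∀ s t : ℝ, s ≤ t → ‖T t s‖ ≤ M * Real.exp (∫ u in s..t, ω u)) :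
    ∀ r t : ℝ, r ≤ t →
      ‖S t r‖ ≤ M * Real.exp (∫ u in r..t, (ω u + M * ‖B u‖)) := by
  intro r t hrt
  have hM0 : (0:ℝ) < M := lt_of_lt_of_le one_pos hM
  have hωall : ∀ a b : ℝ, IntervalIntegrable ω volume a b := by
    intro a b
    rcases le_total a b with h | h
    · exact hω a b h
    · exact (hω b a h).symm
  have hBall : ∀ a b : ℝ, IntervalIntegrable (fun u => ‖B u‖) volume a b := by
    intro a b
    rcases le_total a b with h | h
    · exact hB a b h
    · exact (hB b a h).symm
  have hβall : ∀ a b : ℝ, IntervalIntegrable (fun u => M * ‖B u‖) volume a b :=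
    fun a b => (hBall a b).const_mul M
  set c : ℝ := M * Real.exp (∫ u in r..t, (ω u + M * ‖B u‖)) with hc
  have hc0 : 0 ≤ c := mul_nonneg hM0.le (Real.exp_pos _).le
  -- the primitive of ω
  set Ω : ℝ → ℝ := fun y => ∫ u in r..y, ω u with hΩ
  have hΩc : Continuous Ω := intervalIntegral.continuous_primitive hωall r
  have hΩsplit : ∀ s y : ℝ, (∫ u in s..y, ω u) = Ω y - Ω s := by
    intro s y
    have h1 := intervalIntegral.integral_add_adjacent_intervals (hωall r s) (hωall s y)
    simp only [hΩ]
    linarith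
  have hΩr : Ω r = 0 := by simp [hΩ]
  suffices key : ∀ φ ∈ D, ‖S t r φ‖ ≤ c * ‖φ‖ by
    refine ContinuousLinearMap.opNorm_le_bound _ hc0 ?_
    intro φ
    have hclosed : IsClosed {φ : X | ‖S t r φ‖ ≤ c * ‖φ‖} :=
      isClosed_le (continuous_norm.comp (S t r).continuous)
        (continuous_const.mul continuous_norm)
    have hsub : (D : Set X) ⊆ {φ : X | ‖S t r φ‖ ≤ c * ‖φ‖} := fun ψ hψ => key ψ hψ
    have : closure (D : Set X) ⊆ {φ : X | ‖S t r φ‖ ≤ c * ‖φ‖} :=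
      hclosed.closure_subset_iff.2 hsub
    rw [hDdense.closure_eq] at this
    exact this (mem_univ φ)
  intro φ hφ
  set ψ : ℝ → X := fun s => S s r φ with hψdef
  have hψD : ∀ s, ψ s ∈ D := fun s => hSD s r φ hφ
  have hψderiv : ∀ s, HasDerivAt ψ (-Complex.I • (A s (ψ s) + B s (ψ s))) s :=
    fun s => hS φ hφ r s
  have hψcont : Continuous ψ :=
    continuous_iff_continuousAt.2 fun s => (hψderiv s).continuousAt
  -- Duhamel-type norm bound at each t' ≥ r
  have keybound : ∀ t' : ℝ, r ≤ t' →
      ‖ψ t'‖ ≤ M * Real.exp (Ω t') * ‖φ‖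
        + ∫ s in r..t', ‖B s‖ * (M * Real.exp (Ω t' - Ω s) * ‖ψ s‖) := by
    intro t' hrt'
    -- uniform bound for ‖T t' s‖ on [r, t']
    set C0 : ℝ := M * Real.exp (∫ u in r..t', |ω u|) with hC0def
    have hC0pos : 0 < C0 := mul_pos hM0 (Real.exp_pos _)
    have hC0 : ∀ s ∈ Icc r t', ‖T t' s‖ ≤ C0 := by
      intro s hs
      refine (hTbound s t' hs.2).trans ?_
      refine mul_le_mul_of_nonneg_left (Real.exp_le_exp.2 ?_) hM0.le
      have h1 : (∫ u in s..t', ω u) ≤ ∫ u in s..t', |ω u| :=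
        intervalIntegral.integral_mono_on hs.2 (hωall s t') (hωall s t').abs
          (fun u _ => le_abs_self _)
      have h2 := intervalIntegral.integral_add_adjacent_intervals
        (hωall r s).abs (hωall s t').abs
      have h3 : 0 ≤ ∫ u in r..s, |ω u| :=
        intervalIntegral.integral_nonneg hs.1 (fun u _ => abs_nonneg _)
      linarith
    -- strong continuity of s ↦ T t' s χ on [r, t'] for every χ
    have hTcont : ∀ χ : X, ContinuousOn (fun s => T t' s χ) (Icc r t') := by
      intro χ
      have hχn : ∀ n : ℕ, ∃ y ∈ (D : Set X), dist χ y < 1 / (n + 1) :=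
        fun n => hDdense.exists_dist_lt χ (by positivity)
      choose cs hcsD hcsdist using hχn
      have hTU : TendstoUniformlyOn (fun n s => T t' s (cs n)) (fun s => T t' s χ)
          atTop (Icc r t') := by
        rw [Metric.tendstoUniformlyOn_iff]
        intro ε hε
        have hlim : Tendsto (fun n : ℕ => C0 * (1 / (n + 1))) atTop (𝓝 0) := by
          simpa using tendsto_one_div_add_atTop_nhds_zero_nat.const_mul C0
        filter_upwards [hlim.eventually (gt_mem_nhds hε)] with n hn s hs
        have : dist (T t' s χ) (T t' s (cs n)) ≤ C0 * (1 / (n + 1)) := by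
          rw [dist_eq_norm, ← map_sub]
          calc ‖T t' s (χ - cs n)‖ ≤ ‖T t' s‖ * ‖χ - cs n‖ :=
              (T t' s).le_opNorm _
            _ ≤ C0 * (1 / (n + 1)) := by
              refine mul_le_mul (hC0 s hs) ?_ (norm_nonneg _) hC0pos.le
              rw [← dist_eq_norm]
              exact (hcsdist n).le
        exact lt_of_le_of_lt this hn
      refine hTU.continuousOn (Eventually.of_forall fun n => ?_).frequently
      exact (continuous_iff_continuousAt.2 fun s =>
        (hT' (cs n) (hcsD n) t' s).continuousAt).continuousOn
    set g : ℝ → X := fun s => T t' s (ψ s) with hgdef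
    have hgcont : ContinuousOn g (Icc r t') := by
      intro s0 hs0
      have h1 : ContinuousWithinAt (fun s => T t' s (ψ s0)) (Icc r t') s0 :=
        hTcont (ψ s0) s0 hs0
      have h2 : Tendsto (fun s => T t' s (ψ s - ψ s0)) (𝓝[Icc r t'] s0) (𝓝 0) := by
        refine squeeze_zero_norm' (a := fun s => C0 * ‖ψ s - ψ s0‖) ?_ ?_
        · filter_upwards [self_mem_nhdsWithin] with s hs
          calc ‖T t' s (ψ s - ψ s0)‖ ≤ ‖T t' s‖ * ‖ψ s - ψ s0‖ := (T t' s).le_opNorm _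
            _ ≤ C0 * ‖ψ s - ψ s0‖ :=
              mul_le_mul_of_nonneg_right (hC0 s hs) (norm_nonneg _)
        · have : Tendsto (fun s => C0 * ‖ψ s - ψ s0‖) (𝓝 s0) (𝓝 (C0 * ‖ψ s0 - ψ s0‖)) :=
            (continuous_const.mul ((hψcont.sub continuous_const).norm)).tendsto s0
          simp only [sub_self, norm_zero, mul_zero] at this
          exact this.mono_left nhdsWithin_le_nhds
      have heq : ∀ s, g s = T t' s (ψ s - ψ s0) + T t' s (ψ s0) := by
        intro s
        rw [map_sub]
        abel
      unfold ContinuousWithinAt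
      have hg0 : g s0 = 0 + T t' s0 (ψ s0) := by rw [heq s0]; simp
      rw [hg0]
      exact Tendsto.congr (fun s => (heq s).symm) (h2.add h1)
    have hgderiv : ∀ s0 ∈ Ioo r t',
        HasDerivAt g (-Complex.I • T t' s0 (B s0 (ψ s0))) s0 := by
      intro s0 hs0
      have hmem : Icc r t' ∈ 𝓝 s0 := Icc_mem_nhds hs0.1 hs0.2
      set ψd : X := -Complex.I • (A s0 (ψ s0) + B s0 (ψ s0)) with hψd
      have hψd0 := hψderiv s0
      have hτ : HasDerivAt (fun s => T t' s (ψ s0))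
          (Complex.I • T t' s0 (A s0 (ψ s0))) s0 := hT' (ψ s0) (hψD s0) t' s0
      have hf1 : HasDerivAt (fun s => T t' s (ψ s - ψ s0 - (s - s0) • ψd))
          0 s0 := by
        rw [hasDerivAt_iff_isLittleO]
        have hρ : (fun s => ψ s - ψ s0 - (s - s0) • ψd) =o[𝓝 s0] fun s => s - s0 := by
          rw [hasDerivAt_iff_isLittleO] at hψd0
          exact hψd0
        have hO : (fun s => T t' s (ψ s - ψ s0 - (s - s0) • ψd))
            =O[𝓝 s0] fun s => ψ s - ψ s0 - (s - s0) • ψd := by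
          rw [Asymptotics.isBigO_iff]
          refine ⟨C0, ?_⟩
          filter_upwards [hmem] with s hs
          calc ‖T t' s (ψ s - ψ s0 - (s - s0) • ψd)‖
              ≤ ‖T t' s‖ * ‖ψ s - ψ s0 - (s - s0) • ψd‖ := (T t' s).le_opNorm _
            _ ≤ C0 * ‖ψ s - ψ s0 - (s - s0) • ψd‖ :=
              mul_le_mul_of_nonneg_right (hC0 s hs) (norm_nonneg _)
        simpa using hO.trans_isLittleO hρ
      have hf2 : HasDerivAt (fun s => (s - s0) • T t' s ψd) (T t' s0 ψd) s0 := by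
        rw [hasDerivAt_iff_isLittleO]
        have hv : Tendsto (fun s => T t' s ψd - T t' s0 ψd) (𝓝 s0) (𝓝 0) := by
          have hca : ContinuousAt (fun s => T t' s ψd) s0 :=
            (hTcont ψd).continuousAt hmem
          have := hca.sub (continuousAt_const (y := T t' s0 ψd))
          simpa [Pi.sub_def] using this.tendsto
        rw [Asymptotics.isLittleO_iff]
        intro ε hε
        filter_upwards [hv.eventually (Metric.ball_mem_nhds 0 hε)] with s hs
        have hsmall : ‖T t' s ψd - T t' s0 ψd‖ ≤ ε := by
          rw [dist_zero_right] at hs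
          exact hs.le
        have : (s - s0) • T t' s ψd - (0:ℝ) • T t' s0 ψd - (s - s0) • T t' s0 ψd
            = (s - s0) • (T t' s ψd - T t' s0 ψd) := by
          rw [smul_sub]; simp
        simp only [sub_self, zero_smul, sub_zero]
        calc ‖(s - s0) • T t' s ψd - (s - s0) • T t' s0 ψd‖
            = ‖(s - s0) • (T t' s ψd - T t' s0 ψd)‖ := by rw [smul_sub]
          _ = |s - s0| * ‖T t' s ψd - T t' s0 ψd‖ := by
              rw [norm_smul, Real.norm_eq_abs]
          _ ≤ ε * ‖s - s0‖ := by
              rw [Real.norm_eq_abs, mul_comm]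
              exact mul_le_mul_of_nonneg_right hsmall (abs_nonneg _)
      have hsum := (hf1.add hf2).add hτ
      have heq : (fun s => (T t' s (ψ s - ψ s0 - (s - s0) • ψd)
            + (s - s0) • T t' s ψd) + T t' s (ψ s0)) = g := by
        funext s
        simp only [hgdef, map_sub, (T t' s).map_smul_of_tower]
        abel
      simp only [Pi.add_def] at hsum
      rw [heq] at hsum
      convert hsum using 1
      rw [hψd, (T t' s0).map_smul, map_add, smul_add]
      module
    have hintg : IntervalIntegrable (fun s => -Complex.I • T t' s (B s (ψ s)))
        volume r t' :=
      ((hcont φ hφ t' r).const_smul (-Complex.I)).intervalIntegrable r t'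
    have ftc := intervalIntegral.integral_eq_sub_of_hasDeriv_right_of_le hrt' hgcont
      (fun s hs => (hgderiv s hs).hasDerivWithinAt) hintg
    have hgt' : g t' = ψ t' := by simp [hgdef, hTinit t']
    have hgr : g r = T t' r φ := by
      simp only [hgdef, hψdef]
      rw [hSinit r]
      rfl
    have hduh : ψ t' = T t' r φ + ∫ s in r..t', -Complex.I • T t' s (B s (ψ s)) := by
      rw [ftc, hgt', hgr]
      abel
    -- the integrable bound
    set bnd : ℝ → ℝ := fun s => ‖B s‖ * (M * Real.exp (Ω t' - Ω s) * ‖ψ s‖) with hbnd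
    have hbndint : IntervalIntegrable bnd volume r t' := by
      refine (hBall r t').mul_continuousOn ?_
      exact ((continuous_const.mul
        (((continuous_const.sub hΩc).rexp))).mul hψcont.norm).continuousOn
    have hnormint : ‖∫ s in r..t', -Complex.I • T t' s (B s (ψ s))‖
        ≤ ∫ s in r..t', bnd s := by
      have h1 : ∀ᵐ s ∂volume.restrict (Set.uIoc r t'),
          ‖-Complex.I • T t' s (B s (ψ s))‖ ≤ bnd s := by
        filter_upwards [ae_restrict_mem measurableSet_uIoc] with s hs
        rw [uIoc_of_le hrt'] at hs
        have hst' : s ≤ t' := hs.2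
        rw [norm_smul]
        simp only [norm_neg, Complex.norm_I, one_mul]
        calc ‖T t' s (B s (ψ s))‖ ≤ ‖T t' s‖ * ‖B s (ψ s)‖ := (T t' s).le_opNorm _
          _ ≤ (M * Real.exp (∫ u in s..t', ω u)) * (‖B s‖ * ‖ψ s‖) := by
              refine mul_le_mul (hTbound s t' hst') ((B s).le_opNorm _)
                (norm_nonneg _) ?_
              positivity
          _ = bnd s := by rw [hbnd, hΩsplit s t']; ring
      refine (intervalIntegral.norm_integral_le_abs_of_norm_le h1 hbndint).trans ?_
      rw [abs_of_nonneg]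
      refine intervalIntegral.integral_nonneg hrt' ?_
      intro s _
      rw [hbnd]
      positivity
    calc ‖ψ t'‖ ≤ ‖T t' r φ‖ + ‖∫ s in r..t', -Complex.I • T t' s (B s (ψ s))‖ := by
          rw [hduh]; exact norm_add_le _ _
      _ ≤ M * Real.exp (Ω t') * ‖φ‖ + ∫ s in r..t', bnd s := by
          refine add_le_add ?_ hnormint
          calc ‖T t' r φ‖ ≤ ‖T t' r‖ * ‖φ‖ := (T t' r).le_opNorm _
            _ ≤ M * Real.exp (Ω t') * ‖φ‖ := by
                refine mul_le_mul_of_nonneg_right ?_ (norm_nonneg _)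
                have := hTbound r t' hrt'
                rwa [hΩsplit r t', hΩr, sub_zero] at this
                  
  -- Gronwall
  set f : ℝ → ℝ := fun x => Real.exp (-Ω x) * ‖ψ x‖ with hfdef
  have hfcont : ContinuousOn f (Icc r t) :=
    ((hΩc.neg.rexp).mul hψcont.norm).continuousOn
  have hgron := gronwall_int (β := fun s => M * ‖B s‖) (f := f) (r := r) (t := t)
    (C := M * ‖φ‖) hβall (fun s => by positivity) hfcont (by positivity) ?_
  · have hft := hgron t (right_mem_Icc.2 hrt)
    have hfin : ‖ψ t‖ = Real.exp (Ω t) * f t := by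
      rw [hfdef]
      dsimp only
      rw [← mul_assoc, ← Real.exp_add]
      simp
    rw [hψdef] at hfin
    dsimp only at hfin
    rw [hfin, hc]
    have hsplit : (∫ u in r..t, (ω u + M * ‖B u‖))
        = Ω t + ∫ s in r..t, M * ‖B s‖ := by
      rw [hΩ]
      exact intervalIntegral.integral_add (hωall r t) (hβall r t)
    rw [hsplit, Real.exp_add]
    calc Real.exp (Ω t) * f t
        ≤ Real.exp (Ω t) * (M * ‖φ‖ * Real.exp (∫ s in r..t, M * ‖B s‖)) :=
          mul_le_mul_of_nonneg_left hft (Real.exp_pos _).le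
      _ = M * (Real.exp (Ω t) * Real.exp (∫ s in r..t, M * ‖B s‖)) * ‖φ‖ := by ring
  · intro x hx
    have hb := keybound x hx.1
    have hexp : 0 < Real.exp (-Ω x) := Real.exp_pos _
    rw [hfdef]
    dsimp only
    calc Real.exp (-Ω x) * ‖ψ x‖
        ≤ Real.exp (-Ω x) * (M * Real.exp (Ω x) * ‖φ‖
            + ∫ s in r..x, ‖B s‖ * (M * Real.exp (Ω x - Ω s) * ‖ψ s‖)) :=
          mul_le_mul_of_nonneg_left hb hexp.le
      _ = M * ‖φ‖ + ∫ s in r..x, (M * ‖B s‖) * f s := by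
          rw [mul_add]
          congr 1
          · have h1 : Real.exp (-Ω x) * Real.exp (Ω x) = 1 := by
              rw [← Real.exp_add]; simp
            linear_combination (M * ‖φ‖) * h1
          · rw [← intervalIntegral.integral_const_mul]
            refine intervalIntegral.integral_congr ?_
            intro s _
            rw [hfdef]
            dsimp only
            have h2 : Real.exp (-Ω x) * Real.exp (Ω x - Ω s) = Real.exp (-Ω s) := by
              rw [← Real.exp_add]; ring_nf
            linear_combination (M * ‖B s‖ * ‖ψ s‖) * h2
end

section
/- Let K : [0,1] → bounded operators be continuous and let W(t) solve i W'(t) = K(t) W(t), W(0) = I. Suppose P_k(t), k = 0,…,n, are C^1 families of projections with Σ_k P_k(t) = I, P_j(t)P_k(t) = δ_{jk}P_j(t), and K(t) = i Σ_k P_k'(t) P_k(t). Then W(t) intertwines the projections: W(t) P_k(0) = P_k(t) W(t) for all t ∈ [0,1] and all k. -/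
open scoped BigOperators

/-- Kato's intertwining lemma: if `W` solves `i W' = K(t) W`, `W(0) = I`, where
`K(t) = i Σ_k P_k'(t) P_k(t)` for a `C¹` family of mutually orthogonal projections
`P_k(t)` summing to the identity, then `W(t) P_k(0) = P_k(t) W(t)` for all
`t ∈ [0,1]` and all `k`. -/
theorem stmt18 {X : Type*} [NormedAddCommGroup X] [NormedSpace ℂ X]
    (n : ℕ) (P P' : Fin (n + 1) → ℝ → X →L[ℂ] X)
    (hP : ∀ k t, HasDerivAt (P k) (P' k t) t)
    (hP' : ∀ k, Continuous (P' k))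
    (hsum : ∀ t : ℝ, ∑ k, P k t = 1)
    (horth : ∀ j k, ∀ t : ℝ, P j t * P k t = if j = k then P j t else 0)
    (K : ℝ → X →L[ℂ] X)
    (hK : ∀ t : ℝ, K t = Complex.I • ∑ k, P' k t * P k t)
    (W : ℝ → X →L[ℂ] X)
    (hW0 : W 0 = 1)
    (hW : ∀ t : ℝ, HasDerivAt W (-Complex.I • (K t * W t)) t) :
    ∀ t ∈ Set.Icc (0 : ℝ) 1, ∀ k, W t * P k 0 = P k t * W t := by
  set A : ℝ → X →L[ℂ] X := fun t => ∑ k, P' k t * P k t with hA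
  -- W' = A W
  have hW' : ∀ t, HasDerivAt W (A t * W t) t := by
    intro t
    have := hW t
    rw [hK] at this
    convert this using 1
    rw [smul_mul_assoc, smul_smul]
    simp [Complex.I_mul_I]
    rfl
  -- differentiated orthogonality
  have horth' : ∀ j k, ∀ t : ℝ,
      P' j t * P k t + P j t * P' k t = if j = k then P' j t else 0 := by
    intro j k t
    have h1 : HasDerivAt (fun s => P j s * P k s) (P' j t * P k t + P j t * P' k t) t :=
      (hP j t).mul (hP k t)
    by_cases hjk : j = k
    · subst hjk
      have h2 : HasDerivAt (fun s => P j s * P j s) (P' j t) t := by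
        have : (fun s => P j s * P j s) = P j := funext fun s => by
          simpa using horth j j s
        rw [this]; exact hP j t
      simpa [if_pos rfl] using h1.unique h2
    · have h2 : HasDerivAt (fun s => P j s * P k s) (0 : X →L[ℂ] X) t := by
        have : (fun s => P j s * P k s) = fun _ => (0 : X →L[ℂ] X) := funext fun s => by
          simpa [hjk] using horth j k s
        rw [this]; exact hasDerivAt_const t 0
      simpa [hjk] using h1.unique h2
  -- key commutator identity: A P_k = P'_k + P_k A
  have key : ∀ k, ∀ t : ℝ, A t * P k t = P' k t + P k t * A t := by
    intro k t
    have hAP : A t * P k t = P' k t * P k t := by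
      rw [hA]
      simp only [Finset.sum_mul, mul_assoc, horth]
      simp [Finset.sum_ite_eq']
    have hPA : P k t * A t = P' k t * P k t - P' k t := by
      rw [hA, Finset.mul_sum]
      have hterm : ∀ j, P k t * (P' j t * P j t)
          = (if k = j then P' k t * P k t else 0) - P' k t * P j t := by
        intro j
        have h1 : P k t * P' j t = (if k = j then P' k t else 0) - P' k t * P j t := by
          have := horth' k j t
          rw [eq_sub_iff_add_eq, add_comm]
          exact this
        calc P k t * (P' j t * P j t) = (P k t * P' j t) * P j t := by rw [mul_assoc]
          _ = ((if k = j then P' k t else 0) - P' k t * P j t) * P j t := by rw [h1]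
          _ = (if k = j then P' k t * P j t else 0) - P' k t * (P j t * P j t) := by
              rw [sub_mul, mul_assoc]; congr 1; split <;> simp
          _ = (if k = j then P' k t * P k t else 0) - P' k t * P j t := by
              rw [horth j j t, if_pos rfl]
              congr 1; split <;> simp_all
      rw [Finset.sum_congr rfl fun j _ => hterm j, Finset.sum_sub_distrib,
        Finset.sum_ite_eq (Finset.univ : Finset (Fin (n+1))) k
          (fun _ => P' k t * P k t), if_pos (Finset.mem_univ k), ← Finset.mul_sum, hsum, mul_one]
    rw [hAP, hPA]; abel
  intro t ht k
  -- the difference D and its ODE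
  set D : ℝ → X →L[ℂ] X := fun s => P k s * W s - W s * P k 0 with hDdef
  have hD : ∀ s : ℝ, HasDerivAt D (A s * D s) s := by
    intro s
    have h1 : HasDerivAt (fun u => P k u * W u)
        (P' k s * W s + P k s * (A s * W s)) s := (hP k s).mul (hW' s)
    have h2 : HasDerivAt (fun u => W u * P k 0) (A s * W s * P k 0) s :=
      (hW' s).mul_const (P k 0)
    have h3 := h1.sub h2
    convert h3 using 1
    show A s * D s = _
    rw [hDdef]
    simp only [mul_sub, ← mul_assoc, key k s, add_mul]
    all_goals rfl
  -- Lipschitz setup with clamped vector field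
  have hPc : ∀ j, Continuous (P j) := fun j =>
    continuous_iff_continuousAt.mpr fun s => (hP j s).continuousAt
  have hAc : Continuous A := by
    rw [hA]
    exact continuous_finset_sum _ fun j _ => (hP' j).mul (hPc j)
  obtain ⟨C, hC⟩ := (isCompact_Icc (a := (0:ℝ)) (b := 1)).exists_bound_of_continuousOn
    hAc.continuousOn
  set cl : ℝ → ℝ := fun s => max 0 (min s 1) with hcl
  have hclmem : ∀ s : ℝ, cl s ∈ Set.Icc (0:ℝ) 1 := fun s =>
    ⟨le_max_left _ _, max_le (by norm_num) (min_le_right _ _)⟩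
  set v : ℝ → (X →L[ℂ] X) → (X →L[ℂ] X) := fun s x => A (cl s) * x with hv
  have hlip : ∀ s : ℝ, LipschitzOnWith (Real.toNNReal C) (v s) Set.univ := by
    intro s
    rw [lipschitzOnWith_univ]
    apply LipschitzWith.of_dist_le_mul
    intro x y
    rw [dist_eq_norm, dist_eq_norm, hv]
    calc ‖A (cl s) * x - A (cl s) * y‖ = ‖A (cl s) * (x - y)‖ := by rw [mul_sub]
      _ ≤ ‖A (cl s)‖ * ‖x - y‖ := norm_mul_le _ _
      _ ≤ Real.toNNReal C * ‖x - y‖ := by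
          apply mul_le_mul_of_nonneg_right _ (norm_nonneg _)
          exact le_trans (hC _ (hclmem s)) (Real.le_coe_toNNReal C)
  have huniq := ODE_solution_unique_of_mem_Icc_right (v := v) (s := fun _ => Set.univ)
    (fun s _ => hlip s)
    (f := D) (g := fun _ => (0 : X →L[ℂ] X)) (a := 0) (b := 1)
    (fun s _ => (hD s).continuousAt.continuousWithinAt)
    (by
      intro s hs
      have hcls : cl s = s := by
        rw [hcl]
        simp only
        rw [min_eq_left hs.2.le, max_eq_right hs.1]
      have := (hD s).hasDerivWithinAt (s := Set.Ici s)
      rw [hv]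
      simpa [hcls] using this)
    (fun _ _ => Set.mem_univ _)
    continuousOn_const
    (by
      intro s hs
      simpa [hv] using (hasDerivAt_const s (0 : X →L[ℂ] X)).hasDerivWithinAt (s := Set.Ici s))
    (fun _ _ => Set.mem_univ _)
    (by rw [hDdef]; simp [hW0])
  have hDt : D t = 0 := huniq ht
  rw [hDdef] at hDt
  simp only [sub_eq_zero] at hDt
  exact hDt.symm
end
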